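/- Let n ≥ 1, let E be the n-dimensional Euclidean space and let Cl be the Clifford algebra of the quadratic form Q(v) = −‖v‖² on E, with canonical embedding ι : E → Cl. Fix an element Φ₀ ∈ Cl and a real number σ with σ·σ = 1, set f(x) = 2/(1+‖x‖²), and define ψ : E → Cl by ψ(x) = f(x)^{n/2} • ((1 − σ • ι(x)) · Φ₀) (real power of the positive scalar f(x)). Then ψ is differentiable and for every x ∈ E it satisfies the Killing-type equation Σ_{i=1}^{n} ι(e_i) · (fderiv ℝ ψ x)(e_i) = (σ·(n/2)·f(x)) • ψ(x), where (e_i) is the standard orthonormal basis of E. -/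

import Mathlib

open scoped BigOperators

/-- **Killing-type equation for the test spinor on Euclidean space.**
Let `E` be `n`-dimensional Euclidean space, `Cl` the Clifford algebra of the quadratic
form `Q v = -‖v‖²` on `E` (realized, in order to speak of differentiability, inside an
arbitrary normed `ℝ`-algebra `D` via an algebra isomorphism `θ`).  For `Φ₀ ∈ Cl`, `σ = ±1`,
`f x = 2/(1+‖x‖²)` and `ψ x = f x ^ (n/2) • ((1 - σ • ι x) * Φ₀)`, the spinor `ψ` is
differentiable and satisfies the Killing-type (Dirac eigen-)equation
`∑ i, ι eᵢ * ∂ᵢ ψ = (σ · (n/2) · f) • ψ`. -/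
theorem killing_spinor_eqn_halfspace (n : ℕ) (hn : 1 ≤ n)
    (Q : QuadraticForm ℝ (EuclideanSpace ℝ (Fin n)))
    (hQ : ∀ v : EuclideanSpace ℝ (Fin n), Q v = -‖v‖ ^ 2)
    (D : Type*) [NormedRing D] [NormedAlgebra ℝ D]
    (θ : CliffordAlgebra Q ≃ₐ[ℝ] D)
    (Φ₀ : CliffordAlgebra Q) (σ : ℝ) (hσ : σ * σ = 1)
    (f : EuclideanSpace ℝ (Fin n) → ℝ)
    (hf : ∀ x : EuclideanSpace ℝ (Fin n), f x = 2 / (1 + ‖x‖ ^ 2))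
    (ψ : EuclideanSpace ℝ (Fin n) → D)
    (hψ : ∀ x : EuclideanSpace ℝ (Fin n),
      ψ x = f x ^ ((n : ℝ) / 2) • θ ((1 - σ • CliffordAlgebra.ι Q x) * Φ₀)) :
    Differentiable ℝ ψ ∧
      ∀ x : EuclideanSpace ℝ (Fin n),
        ∑ i : Fin n,
            θ (CliffordAlgebra.ι Q (EuclideanSpace.single i 1)) *
              fderiv ℝ ψ x (EuclideanSpace.single i 1)
          = (σ * ((n : ℝ) / 2) * f x) • ψ x := by
  classical
  set r : ℝ := (n : ℝ) / 2 with hr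
  have hxpos : ∀ x : EuclideanSpace ℝ (Fin n), (0:ℝ) < 1 + ‖x‖ ^ 2 := fun x => by positivity
  -- the linear part of the spinor
  let Mlin : EuclideanSpace ℝ (Fin n) →ₗ[ℝ] D :=
    { toFun := fun v => θ (CliffordAlgebra.ι Q v * Φ₀)
      map_add' := fun a b => by simp [add_mul]
      map_smul' := fun c a => by simp [smul_mul_assoc] }
  let M : EuclideanSpace ℝ (Fin n) →L[ℝ] D := Mlin.toContinuousLinearMap
  let B : EuclideanSpace ℝ (Fin n) → D := fun t => θ Φ₀ - σ • M t
  have hMe : ∀ v, M v = θ (CliffordAlgebra.ι Q v * Φ₀) := fun v => rfl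
  have hψB : ψ = fun t => f t ^ r • B t := by
    funext t
    rw [hψ t]
    have h1 : (1 - σ • CliffordAlgebra.ι Q t) * Φ₀
        = Φ₀ - σ • (CliffordAlgebra.ι Q t * Φ₀) := by
      rw [sub_mul, one_mul, smul_mul_assoc]
    rw [h1, map_sub, map_smul]
    rfl
  -- derivative of the scalar factor
  let i' : EuclideanSpace ℝ (Fin n) → (EuclideanSpace ℝ (Fin n) →L[ℝ] ℝ) := fun x =>
    (fderivInnerCLM ℝ (x, x)).comp
      ((ContinuousLinearMap.id ℝ _).prod (ContinuousLinearMap.id ℝ _))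
  let G' : EuclideanSpace ℝ (Fin n) → (EuclideanSpace ℝ (Fin n) →L[ℝ] ℝ) := fun x =>
    ((2:ℝ) ^ r) • ((-r * (1 + ‖x‖ ^ 2) ^ (-r - 1)) • i' x)
  have hh : ∀ x : EuclideanSpace ℝ (Fin n),
      HasFDerivAt (fun t : EuclideanSpace ℝ (Fin n) => 1 + ‖t‖ ^ 2) (i' x) x := by
    intro x
    have h1 : HasFDerivAt (fun t : EuclideanSpace ℝ (Fin n) => (inner ℝ t t : ℝ))
        (i' x) x := HasFDerivAt.inner (𝕜 := ℝ) (hasFDerivAt_id x) (hasFDerivAt_id x)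
    have h2 := (hasFDerivAt_const (1:ℝ) x).add h1
    simp only [real_inner_self_eq_norm_sq] at h2
    rw [zero_add] at h2
    exact h2
  have hgx : ∀ x, HasFDerivAt (fun t => f t ^ r) (G' x) x := by
    intro x
    have heq : (fun t => f t ^ r)
        = fun t : EuclideanSpace ℝ (Fin n) => (2:ℝ) ^ r * (1 + ‖t‖ ^ 2) ^ (-r) := by
      funext t
      rw [hf t, Real.div_rpow (by norm_num) (hxpos t).le, Real.rpow_neg (hxpos t).le,
        div_eq_mul_inv]
    rw [heq]
    exact ((hh x).rpow_const (Or.inl (hxpos x).ne')).const_mul _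
  have hB' : ∀ x : EuclideanSpace ℝ (Fin n),
      HasFDerivAt B ((0 : EuclideanSpace ℝ (Fin n) →L[ℝ] D) - σ • M) x := fun x =>
    (hasFDerivAt_const (θ Φ₀) x).sub (M.hasFDerivAt.const_smul σ)
  have key : ∀ x : EuclideanSpace ℝ (Fin n), HasFDerivAt ψ
      ((f x ^ r) • ((0 : EuclideanSpace ℝ (Fin n) →L[ℝ] D) - σ • M)
        + (G' x).smulRight (B x)) x := by
    intro x
    rw [hψB]
    exact (hgx x).smul (hB' x)
  refine ⟨fun x => (key x).differentiableAt, fun x => ?_⟩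
  have hfd := (key x).fderiv
  rw [hfd]
  -- abbreviations
  set p : D := θ Φ₀ with hp
  set u : D := θ (CliffordAlgebra.ι Q x * Φ₀) with hu
  set ax : D := θ (CliffordAlgebra.ι Q x) with haxdef
  set t : ℝ := ‖x‖ ^ 2 with ht
  set A : ℝ := f x ^ r with hA
  set F : ℝ := f x with hF
  set κ : ℝ := (2:ℝ) ^ r * (-r * (1 + t) ^ (-r - 1)) * 2 with hκdef
  have haim : ∀ i : Fin n,
      θ (CliffordAlgebra.ι Q (EuclideanSpace.single i 1)) *
        θ (CliffordAlgebra.ι Q (EuclideanSpace.single i 1) * Φ₀) = -p := by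
    intro i
    have hQe : Q (EuclideanSpace.single i (1:ℝ)) = -1 := by
      rw [hQ]; simp
    rw [← map_mul, ← mul_assoc, CliffordAlgebra.ι_sq_scalar, hQe, ← Algebra.smul_def,
      map_smul, neg_one_smul]
  have hax_u : ax * u = (-t) • p := by
    have hQx : Q x = -t := by rw [hQ, ht]
    rw [haxdef, hu, ← map_mul, ← mul_assoc, CliffordAlgebra.ι_sq_scalar, hQx,
      ← Algebra.smul_def, map_smul]
  have hax_p : ax * p = u := by rw [haxdef, hp, ← map_mul, hu]
  have hax_B : ax * B x = u + (σ * t) • p := by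
    show ax * (p - σ • M x) = u + (σ * t) • p
    rw [hMe, ← hu, mul_sub, hax_p, mul_smul_comm, hax_u, smul_smul]
    module
  -- summing the basis vectors recovers `x`
  have hsum_x : (∑ i : Fin n, x i • EuclideanSpace.single i (1:ℝ)) = x := by
    ext j
    rw [WithLp.ofLp_sum, Finset.sum_apply]
    simp [EuclideanSpace.single_apply, mul_comm]
  have hsum_a : (∑ i : Fin n,
      x i • θ (CliffordAlgebra.ι Q (EuclideanSpace.single i 1))) = ax := by
    rw [haxdef]
    conv_rhs => rw [← hsum_x]
    rw [map_sum, map_sum]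
    simp [map_smul]
  -- evaluate the derivative on basis vectors
  have happ : ∀ i : Fin n,
      ((f x ^ r) • ((0 : EuclideanSpace ℝ (Fin n) →L[ℝ] D) - σ • M)
        + (G' x).smulRight (B x)) (EuclideanSpace.single i 1)
      = -((A * σ) • θ (CliffordAlgebra.ι Q (EuclideanSpace.single i 1) * Φ₀))
        + (κ * x i) • B x := by
    intro i
    have hGe : G' x (EuclideanSpace.single i 1) = κ * x i := by
      simp only [G', i', κ, ContinuousLinearMap.smul_apply, ContinuousLinearMap.comp_apply,
        ContinuousLinearMap.prod_apply, ContinuousLinearMap.id_apply, fderivInnerCLM_apply,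
        EuclideanSpace.inner_single_right, EuclideanSpace.inner_single_left, ht,
        RCLike.conj_to_real, smul_eq_mul]
      push_cast
      ring_nf
      try rfl
    simp only [ContinuousLinearMap.add_apply, ContinuousLinearMap.smul_apply,
      ContinuousLinearMap.sub_apply, ContinuousLinearMap.zero_apply,
      ContinuousLinearMap.neg_apply, ContinuousLinearMap.smulRight_apply, hGe, zero_sub]
    rw [hMe, ← hA, smul_neg, smul_smul]
  have hBx : B x = p - σ • u := by
    show θ Φ₀ - σ • M x = p - σ • u
    rw [hMe, ← hu, ← hp]
  have htpos : (0:ℝ) < 1 + t := by rw [ht]; positivity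
  have hA2 : A = (2:ℝ) ^ r * (1 + t) ^ (-r) := by
    rw [hA, hF, hf x, ht, Real.div_rpow (by norm_num) (hxpos x).le,
      Real.rpow_neg (hxpos x).le, div_eq_mul_inv]
  have hFeq : F = 2 / (1 + t) := by rw [hF, hf x, ht]
  have hsplit : ((1:ℝ) + t) ^ (-r - 1) = (1 + t) ^ (-r) * (1 + t)⁻¹ := by
    rw [show (-r - 1) = (-r) + (-1) by ring, Real.rpow_add htpos, Real.rpow_neg_one]
  have hκA : κ = -(r * F * A) := by
    rw [hκdef, hsplit, hA2, hFeq, div_eq_mul_inv]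
    ring
  have hFt : F * (1 + t) = 2 := by
    rw [hFeq]
    field_simp
  have hn2 : (n : ℝ) = 2 * r := by rw [hr]; ring
  -- compute the sum
  calc ∑ i : Fin n,
        θ (CliffordAlgebra.ι Q (EuclideanSpace.single i 1)) *
          (((f x ^ r) • ((0 : EuclideanSpace ℝ (Fin n) →L[ℝ] D) - σ • M)
            + (G' x).smulRight (B x)) (EuclideanSpace.single i 1))
      = ∑ i : Fin n, ((A * σ) • p
          + (κ * x i) • (θ (CliffordAlgebra.ι Q (EuclideanSpace.single i 1)) * B x)) := by
        refine Finset.sum_congr rfl fun i _ => ?_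
        rw [happ i, mul_add, mul_neg, mul_smul_comm, haim i, smul_neg, neg_neg,
          mul_smul_comm]
    _ = (n : ℝ) • ((A * σ) • p) + κ • (ax * B x) := by
        rw [Finset.sum_add_distrib, Finset.sum_const, Finset.card_univ, Fintype.card_fin,
          ← Nat.cast_smul_eq_nsmul ℝ]
        congr 1
        rw [← hsum_a, Finset.sum_mul, Finset.smul_sum]
        refine Finset.sum_congr rfl fun i _ => ?_
        rw [mul_smul, smul_mul_assoc]
    _ = (σ * r * F) • ψ x := by
        rw [hax_B, hψB]
        show _ = (σ * r * F) • (f x ^ r • B x)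
        rw [← hA, hBx]
        match_scalars
        · linear_combination (A * σ) * hn2 + (σ * t) * hκA - (σ * r * A) * hFt
        · linear_combination hκA + (r * F * A) * hσ
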